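/- Frontier Sufficiency (Lemma 2.2). Let s ∈ V be a source vertex and let d : ℕ → V → EReal be a sequence of distance estimates satisfying: (i) d 0 s = 0 and d 0 v = ⊤ for every v ≠ s; (ii) monotonicity: d (t+1) v ≤ d t v for all t and v; (iii) frontier relaxation: defining the frontier F(0) = {s} and F(t) = {v : d t v < d (t−1) v} for t ≥ 1, for every t ≥ 0, every u ∈ F(t) and every edge (u,v) one has d (t+1) v ≤ d t u + w u v. Then for every t ≥ 0, every vertex v, and every walk P from s to v with at most t edges, d t v ≤ weight(P). In particular, d (|V|−1) v is at most the minimum weight over all walks from s to v with at most |V|−1 edges. -/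

import Mathlib

/-- `IsWalk E p t a b` : `p 0 = a`, `p t = b`, and each consecutive pair is an edge. -/
def IsWalk {V : Type*} (E : V → V → Prop) (p : ℕ → V) (t : ℕ) (a b : V) : Prop :=
  p 0 = a ∧ p t = b ∧ ∀ i < t, E (p i) (p (i + 1))

/-- Weight of a walk with `t` edges. -/
def walkWeight {V : Type*} (w : V → V → ℝ) (p : ℕ → V) (t : ℕ) : ℝ :=
  ∑ i ∈ Finset.range t, w (p i) (p (i + 1))

/-- Frontier Sufficiency (Lemma 2.2). -/
theorem frontier_sufficiency
    {V : Type*} [Fintype V] [Nonempty V]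
    (E : V → V → Prop) (w : V → V → ℝ) (s : V)
    (d : ℕ → V → EReal)
    (h0s : d 0 s = 0) (h0 : ∀ v : V, v ≠ s → d 0 v = ⊤)
    (hmono : ∀ (t : ℕ) (v : V), d (t + 1) v ≤ d t v)
    (F : ℕ → Set V)
    (hF0 : F 0 = {s})
    (hFt : ∀ t : ℕ, F (t + 1) = {v : V | d (t + 1) v < d t v})
    (hrelax : ∀ (t : ℕ) (u v : V), u ∈ F t → E u v →
      d (t + 1) v ≤ d t u + (w u v : EReal)) :
    (∀ (t : ℕ) (v : V) (p : ℕ → V) (l : ℕ), l ≤ t → IsWalk E p l s v →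
      d t v ≤ (walkWeight w p l : EReal)) ∧
    (∀ (v : V) (p : ℕ → V) (l : ℕ), l ≤ Fintype.card V - 1 → IsWalk E p l s v →
      d (Fintype.card V - 1) v ≤ (walkWeight w p l : EReal)) := by
  classical
  have hmono' : ∀ (t₁ t₂ : ℕ), t₁ ≤ t₂ → ∀ v : V, d t₂ v ≤ d t₁ v := by
    intro t₁ t₂ h
    induction t₂ with
    | zero => simp_all
    | succ n ih =>
      intro v
      rcases Nat.lt_succ_iff_lt_or_eq.mp (Nat.lt_succ_of_le h) with h' | h'
      · exact (hmono n v).trans (ih (Nat.lt_succ_iff.mp h') v)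
      · subst h'; exact le_rfl
  have key : ∀ (l : ℕ) (v : V) (p : ℕ → V), IsWalk E p l s v →
      d l v ≤ (walkWeight w p l : EReal) := by
    intro l
    induction l with
    | zero =>
      rintro v p ⟨h1, h2, -⟩
      have : v = s := h2 ▸ h1
      subst this
      simp [walkWeight, h0s]
    | succ l ih =>
      rintro v p ⟨h1, h2, h3⟩
      set u := p l with hu
      have hpre : IsWalk E p l s u := ⟨h1, rfl, fun i hi => h3 i (Nat.lt_succ_of_lt hi)⟩
      have hdu : d l u ≤ (walkWeight w p l : EReal) := ih u p hpre
      have hex : ∃ t', d t' u = d l u := ⟨l, rfl⟩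
      have heq : d (Nat.find hex) u = d l u := Nat.find_spec hex
      have ht'le : Nat.find hex ≤ l := Nat.find_le rfl
      have hmem : u ∈ F (Nat.find hex) := by
        rcases h : Nat.find hex with _ | k
        · rw [hF0]
          by_contra hne
          have hns : u ≠ s := by simpa using hne
          rw [h, h0 u hns] at heq
          have hlt : d l u < ⊤ :=
            lt_of_le_of_lt hdu (by exact_mod_cast lt_top_iff_ne_top.mpr (EReal.coe_ne_top _))
          rw [← heq] at hlt
          exact absurd hlt (lt_irrefl _)
        · rw [hFt]
          have hne : d k u ≠ d l u := Nat.find_min hex (h ▸ Nat.lt_succ_self k)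
          rw [h] at heq
          exact lt_of_le_of_ne (hmono k u) (heq ▸ fun hc => hne hc.symm)
      have hedge : E u v := h2 ▸ h3 l (Nat.lt_succ_self l)
      have hrel : d (Nat.find hex + 1) v ≤ d (Nat.find hex) u + (w u v : EReal) :=
        hrelax _ u v hmem hedge
      have hmono2 : d (l + 1) v ≤ d (Nat.find hex + 1) v :=
        hmono' _ _ (Nat.succ_le_succ ht'le) v
      have hsum : (walkWeight w p (l + 1) : ℝ) = walkWeight w p l + w u v := by
        simp [walkWeight, Finset.sum_range_succ, ← h2, hu]
      calc d (l + 1) v ≤ d (Nat.find hex) u + (w u v : EReal) := hmono2.trans hrel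
        _ = d l u + (w u v : EReal) := by rw [heq]
        _ ≤ (walkWeight w p l : EReal) + (w u v : EReal) := by
            exact add_le_add_left hdu _
        _ = (walkWeight w p (l + 1) : EReal) := by
            rw [hsum]; push_cast; ring
      
  have main : ∀ (t : ℕ) (v : V) (p : ℕ → V) (l : ℕ), l ≤ t → IsWalk E p l s v →
      d t v ≤ (walkWeight w p l : EReal) := by
    intro t v p l hl hw
    exact (hmono' l t hl v).trans (key l v p hw)
  exact ⟨main, fun v p l hl hw => main _ v p l hl hw⟩
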